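/- (Identity (4.27).) Let φ ∈ C²(ℝ,ℝ) solve the stationary NLS equation with parameter E, and let Λ² ∈ ℝ and ψ, χ ∈ C²(ℝ,ℝ) be such that ψ, ψ', χ, χ' are square-integrable, tend to 0 as |x| → ∞, and L₊(E)ψ = −Λ²χ and L₋(E)χ = ψ hold pointwise on ℝ. Then ∫_ℝ ψ(x)² dx + Λ² ∫_ℝ χ(x)² dx = 2p ∫_ℝ φ(x)^{2p} ψ(x)χ(x) dx. -/

import Mathlib

open Set Filter MeasureTheory

/-- (Identity (4.27).) If `L₊(E)ψ = -Λ²χ` and `L₋(E)χ = ψ` pointwise,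
with `ψ, ψ', χ, χ'` square-integrable and decaying at infinity, then
`∫ ψ² + Λ² ∫ χ² = 2p ∫ φ^{2p} ψ χ`. -/
lemma d2 {f : ℝ → ℝ} (hf : ContDiff ℝ 2 f) :
    Differentiable ℝ f ∧ Differentiable ℝ (deriv f) ∧ Continuous (deriv (deriv f)) := by
  have h : ContDiff ℝ ((1 : ℕ) + 1) f := by
    have : ((2 : ℕ) : WithTop ℕ∞) = (1 : ℕ) + 1 := by norm_num
    exact this ▸ hf
  obtain ⟨hd, -, hcd⟩ := contDiff_succ_iff_deriv.mp h
  obtain ⟨hd2, hc2⟩ := contDiff_one_iff_deriv.mp hcd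
  exact ⟨hd, hd2, hc2⟩

lemma bdd_of_cocompact {F : ℝ → ℝ} (hc : Continuous F) (h : Tendsto F (cocompact ℝ) (nhds 0)) :
    ∃ C, ∀ x, |F x| ≤ C := by
  have h1 : ∀ᶠ x in cocompact ℝ, |F x| ≤ 1 := by
    have := Metric.tendsto_nhds.mp h 1 one_pos
    filter_upwards [this] with x hx
    simpa [Real.dist_eq] using hx.le
  obtain ⟨K, hK, hKsub⟩ := mem_cocompact.mp h1
  obtain ⟨C, hC⟩ := hK.exists_bound_of_continuousOn hc.norm.continuousOn
  refine ⟨max C 1, fun x => ?_⟩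
  by_cases hx : x ∈ K
  · exact le_max_of_le_left (by simpa using hC x hx)
  · exact le_max_of_le_right (hKsub hx)

lemma aux_int {f F h : ℝ → ℝ} (hfc : Continuous f) (hfnn : ∀ x, 0 ≤ f x)
    (hhc : Continuous h) (hh : Integrable h)
    (hF : ∀ x, HasDerivAt F (h x - f x) x)
    (hFb : ∃ C, ∀ x, |F x| ≤ C) : Integrable f := by
  obtain ⟨C, hC⟩ := hFb
  apply integrable_of_intervalIntegral_norm_bounded (μ := volume) (l := (atTop : Filter ℕ))
    (a := fun n : ℕ => -(n : ℝ)) (b := fun n : ℕ => (n : ℝ)) ((∫ x, |h x|) + 2 * C)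
  · exact fun i => hfc.integrableOn_Ioc
  · exact tendsto_neg_atBot_iff.mpr tendsto_natCast_atTop_atTop
  · exact tendsto_natCast_atTop_atTop
  · filter_upwards with n
    have hab : -(n : ℝ) ≤ (n : ℝ) := neg_le_self (Nat.cast_nonneg n)
    have hif : IntervalIntegrable f volume (-(n : ℝ)) n := hfc.intervalIntegrable _ _
    have hih : IntervalIntegrable h volume (-(n : ℝ)) n := hhc.intervalIntegrable _ _
    have hihf : IntervalIntegrable (fun x => h x - f x) volume (-(n : ℝ)) n :=
      (hhc.sub hfc).intervalIntegrable _ _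
    have hftc : (∫ x in (-(n : ℝ))..n, (h x - f x)) = F n - F (-(n : ℝ)) :=
      intervalIntegral.integral_eq_sub_of_hasDerivAt (fun x _ => hF x) hihf
    have hsplit : (∫ x in (-(n : ℝ))..n, (h x - f x))
        = (∫ x in (-(n : ℝ))..n, h x) - ∫ x in (-(n : ℝ))..n, f x :=
      intervalIntegral.integral_sub hih hif
    have h1 : (∫ x in (-(n : ℝ))..n, h x) ≤ ∫ x, |h x| := by
      calc (∫ x in (-(n : ℝ))..n, h x) ≤ |∫ x in (-(n : ℝ))..n, h x| := le_abs_self _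
        _ ≤ ∫ x in (-(n : ℝ))..n, |h x| := intervalIntegral.abs_integral_le_integral_abs hab
        _ = ∫ x in Ioc (-(n : ℝ)) n, |h x| := intervalIntegral.integral_of_le hab
        _ ≤ ∫ x, |h x| := setIntegral_le_integral hh.abs
            (Eventually.of_forall fun x => abs_nonneg _)
    have hnorm : (∫ x in (-(n : ℝ))..n, ‖f x‖) = ∫ x in (-(n : ℝ))..n, f x := by
      congr 1; ext x; exact Real.norm_of_nonneg (hfnn x)
    rw [hnorm]
    have : (∫ x in (-(n : ℝ))..n, f x)
        = (∫ x in (-(n : ℝ))..n, h x) - (F n - F (-(n : ℝ))) := by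
      rw [← hftc, hsplit]; ring
    rw [this]
    have := hC (n : ℝ); have := hC (-(n : ℝ))
    have habs1 := abs_le.mp (hC (n : ℝ))
    have habs2 := abs_le.mp (hC (-(n : ℝ)))
    linarith

theorem identity_4_27
    (p : ℕ) (hp : 1 ≤ p) (V : ℝ → ℝ) (hVc : Continuous V) (hVb : ∃ M, ∀ x, |V x| ≤ M)
    (E lam2 : ℝ) (φ ψ χ : ℝ → ℝ)
    (hφ : ContDiff ℝ 2 φ) (hψ : ContDiff ℝ 2 ψ) (hχ : ContDiff ℝ 2 χ)
    (hstat : ∀ x : ℝ,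
      -(deriv (deriv φ) x) + V x * φ x - φ x ^ (2 * p + 1) + E * φ x = 0)
    (hint : Integrable (fun x => (ψ x) ^ 2) ∧ Integrable (fun x => (deriv ψ x) ^ 2) ∧
            Integrable (fun x => (χ x) ^ 2) ∧ Integrable (fun x => (deriv χ x) ^ 2))
    (hdecay : Tendsto ψ (cocompact ℝ) (nhds 0) ∧ Tendsto (deriv ψ) (cocompact ℝ) (nhds 0) ∧
              Tendsto χ (cocompact ℝ) (nhds 0) ∧ Tendsto (deriv χ) (cocompact ℝ) (nhds 0))
    (heq1 : ∀ x : ℝ,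
      -(deriv (deriv ψ) x) + (V x - (2 * (p : ℝ) + 1) * φ x ^ (2 * p) + E) * ψ x
        = -lam2 * χ x)
    (heq2 : ∀ x : ℝ,
      -(deriv (deriv χ) x) + (V x - φ x ^ (2 * p) + E) * χ x = ψ x) :
    (∫ x : ℝ, (ψ x) ^ 2) + lam2 * (∫ x : ℝ, (χ x) ^ 2)
      = 2 * (p : ℝ) * ∫ x : ℝ, φ x ^ (2 * p) * ψ x * χ x := by
  obtain ⟨M, hM⟩ := hVb
  obtain ⟨hiψ, hiψ', hiχ, hiχ'⟩ := hint
  obtain ⟨hdψ, hdψ', hdχ, hdχ'⟩ := hdecay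
  obtain ⟨hψ1, hψ2, hψ3⟩ := d2 hψ
  obtain ⟨hχ1, hχ2, hχ3⟩ := d2 hχ
  have cψ : Continuous ψ := hψ1.continuous
  have cχ : Continuous χ := hχ1.continuous
  have cψ' : Continuous (deriv ψ) := hψ2.continuous
  have cχ' : Continuous (deriv χ) := hχ2.continuous
  have cφ : Continuous φ := hφ.continuous
  have hφnn : ∀ x, 0 ≤ φ x ^ (2 * p) := fun x => by
    rw [pow_mul]; positivity
  -- second derivatives from the equations
  have hψ'' : ∀ x, deriv (deriv ψ) x
      = (V x - (2 * (p : ℝ) + 1) * φ x ^ (2 * p) + E) * ψ x + lam2 * χ x := fun x => by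
    have := heq1 x; linarith
  have hχ'' : ∀ x, deriv (deriv χ) x = (V x - φ x ^ (2 * p) + E) * χ x - ψ x := fun x => by
    have := heq2 x; linarith
  -- integrable products
  have hiψχ : Integrable (fun x => ψ x * χ x) := by
    refine Integrable.mono' ((hiψ.add hiχ).div_const 2)
      ((cψ.mul cχ).aestronglyMeasurable) (Eventually.of_forall fun x => ?_)
    simp only [Pi.add_apply]
    rw [Real.norm_eq_abs, abs_le]
    constructor <;> nlinarith [sq_nonneg (ψ x - χ x), sq_nonneg (ψ x + χ x)]
  have hiVψ : Integrable (fun x => (V x + E) * ψ x ^ 2) := by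
    refine Integrable.mono' (hiψ.const_mul (M + |E|))
      (((hVc.add continuous_const).mul (cψ.pow 2)).aestronglyMeasurable)
      (Eventually.of_forall fun x => ?_)
    rw [Real.norm_eq_abs, abs_mul, abs_of_nonneg (sq_nonneg (ψ x))]
    exact mul_le_mul_of_nonneg_right ((abs_add_le _ _).trans (add_le_add (hM x) le_rfl))
      (sq_nonneg _)
  have hiVχ : Integrable (fun x => (V x + E) * χ x ^ 2) := by
    refine Integrable.mono' (hiχ.const_mul (M + |E|))
      (((hVc.add continuous_const).mul (cχ.pow 2)).aestronglyMeasurable)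
      (Eventually.of_forall fun x => ?_)
    rw [Real.norm_eq_abs, abs_mul, abs_of_nonneg (sq_nonneg (χ x))]
    exact mul_le_mul_of_nonneg_right ((abs_add_le _ _).trans (add_le_add (hM x) le_rfl))
      (sq_nonneg _)
  -- step 1 : φ^{2p} ψ² integrable
  have step1 : Integrable (fun x => (2 * (p : ℝ) + 1) * (φ x ^ (2 * p) * ψ x ^ 2)) := by
    refine aux_int (f := fun x => (2 * (p : ℝ) + 1) * (φ x ^ (2 * p) * ψ x ^ 2))
      (F := fun x => deriv ψ x * ψ x)
      (h := fun x => deriv ψ x ^ 2 + ((V x + E) * ψ x ^ 2 + lam2 * (ψ x * χ x)))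
      (continuous_const.mul ((cφ.pow _).mul (cψ.pow 2)))
      (fun x => mul_nonneg (by positivity) (mul_nonneg (hφnn x) (sq_nonneg _)))
      ((cψ'.pow 2).add (((hVc.add continuous_const).mul (cψ.pow 2)).add
        (continuous_const.mul (cψ.mul cχ)))) (hiψ'.add (hiVψ.add (hiψχ.const_mul lam2))) (fun x => ?_)
      (bdd_of_cocompact (cψ'.mul cψ) (by simpa using hdψ'.mul hdψ))
    have H := ((hψ2 x).hasDerivAt.mul (hψ1 x).hasDerivAt)
    refine H.congr_deriv ?_
    rw [hψ'' x]; ring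
  have hf1 : Integrable (fun x => φ x ^ (2 * p) * ψ x ^ 2) := by
    have h21 : (2 * (p : ℝ) + 1) ≠ 0 := by positivity
    have := step1.const_mul (1 / (2 * (p : ℝ) + 1))
    have heqf : (fun x => (1 / (2 * (p : ℝ) + 1)) *
        ((2 * (p : ℝ) + 1) * (φ x ^ (2 * p) * ψ x ^ 2)))
        = fun x => φ x ^ (2 * p) * ψ x ^ 2 := by
      funext x; field_simp
    rwa [heqf] at this
  -- step 2 : φ^{2p} χ² integrable
  have hf2 : Integrable (fun x => φ x ^ (2 * p) * χ x ^ 2) := by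
    refine aux_int (f := fun x => φ x ^ (2 * p) * χ x ^ 2)
      (F := fun x => deriv χ x * χ x)
      (h := fun x => deriv χ x ^ 2 + ((V x + E) * χ x ^ 2 - ψ x * χ x))
      ((cφ.pow _).mul (cχ.pow 2)) (fun x => mul_nonneg (hφnn x) (sq_nonneg _))
      ((cχ'.pow 2).add (((hVc.add continuous_const).mul (cχ.pow 2)).sub (cψ.mul cχ))) (hiχ'.add (hiVχ.sub hiψχ)) (fun x => ?_)
      (bdd_of_cocompact (cχ'.mul cχ) (by simpa using hdχ'.mul hdχ))
    have H := ((hχ2 x).hasDerivAt.mul (hχ1 x).hasDerivAt)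
    refine H.congr_deriv ?_
    rw [hχ'' x]; ring
  -- the cross term is integrable
  have hg : Integrable (fun x => φ x ^ (2 * p) * ψ x * χ x) := by
    refine Integrable.mono' ((hf1.add hf2).div_const 2)
      (((cφ.pow (2 * p)).mul cψ |>.mul cχ).aestronglyMeasurable)
      (Eventually.of_forall fun x => ?_)
    simp only [Pi.add_apply]
    rw [Real.norm_eq_abs, abs_le]
    constructor <;>
      nlinarith [mul_nonneg (hφnn x) (sq_nonneg (ψ x - χ x)),
        mul_nonneg (hφnn x) (sq_nonneg (ψ x + χ x))]
  -- the Wronskian-type function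
  have hW : ∀ x, HasDerivAt (fun x => deriv χ x * ψ x - deriv ψ x * χ x)
      (2 * (p : ℝ) * (φ x ^ (2 * p) * ψ x * χ x) - ψ x ^ 2 - lam2 * χ x ^ 2) x := by
    intro x
    have H := ((hχ2 x).hasDerivAt.mul (hψ1 x).hasDerivAt).sub
      ((hψ2 x).hasDerivAt.mul (hχ1 x).hasDerivAt)
    refine H.congr_deriv ?_
    rw [hψ'' x, hχ'' x]; ring
  have hWint : Integrable (fun x =>
      2 * (p : ℝ) * (φ x ^ (2 * p) * ψ x * χ x) - ψ x ^ 2 - lam2 * χ x ^ 2) :=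
    ((hg.const_mul _).sub hiψ).sub (hiχ.const_mul lam2)
  have hWc : Tendsto (fun x => deriv χ x * ψ x - deriv ψ x * χ x) (cocompact ℝ) (nhds 0) := by
    simpa using (hdχ'.mul hdψ).sub (hdψ'.mul hdχ)
  have hbot : Tendsto (fun x => deriv χ x * ψ x - deriv ψ x * χ x) atBot (nhds 0) :=
    hWc.mono_left (by rw [cocompact_eq_atBot_atTop]; exact le_sup_left)
  have htop : Tendsto (fun x => deriv χ x * ψ x - deriv ψ x * χ x) atTop (nhds 0) :=
    hWc.mono_left (by rw [cocompact_eq_atBot_atTop]; exact le_sup_right)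
  have hzero : (∫ x, (2 * (p : ℝ) * (φ x ^ (2 * p) * ψ x * χ x)
      - ψ x ^ 2 - lam2 * χ x ^ 2)) = 0 := by
    simpa using integral_of_hasDerivAt_of_tendsto hW hWint hbot htop
  have e1 : (∫ x, (2 * (p : ℝ) * (φ x ^ (2 * p) * ψ x * χ x)
      - ψ x ^ 2 - lam2 * χ x ^ 2))
      = (∫ x, (2 * (p : ℝ) * (φ x ^ (2 * p) * ψ x * χ x) - ψ x ^ 2))
        - ∫ x, lam2 * χ x ^ 2 :=
    integral_sub ((hg.const_mul _).sub hiψ) (hiχ.const_mul lam2)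
  have e2 : (∫ x, (2 * (p : ℝ) * (φ x ^ (2 * p) * ψ x * χ x) - ψ x ^ 2))
      = (∫ x, 2 * (p : ℝ) * (φ x ^ (2 * p) * ψ x * χ x)) - ∫ x, ψ x ^ 2 :=
    integral_sub (hg.const_mul _) hiψ
  have e3 : (∫ x, 2 * (p : ℝ) * (φ x ^ (2 * p) * ψ x * χ x))
      = 2 * (p : ℝ) * ∫ x, φ x ^ (2 * p) * ψ x * χ x := integral_const_mul _ _
  have e4 : (∫ x, lam2 * χ x ^ 2) = lam2 * ∫ x, χ x ^ 2 := integral_const_mul _ _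
  rw [e1, e2, e3, e4] at hzero
  linarith
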